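/- Let U ⊆ ℝ^d be a U-shaped closed convex set, let q be a frontier point of U, let h be a non-vertical supporting hyperplane of U at q with outward unit normal u (so ⟨u, x − q⟩ ≤ 0 for all x ∈ U, and u_d < 0), let H⁻ = {x ∈ ℝ^d : ⟨u, x − q⟩ ≥ 0}, and let ε > 0. Set a = q − ε e_d, T = conv(U ∪ {a}) ∩ H⁻, and T′ = a + 2(T − a). Then T + ε e_d ⊆ U ∩ (H⁻ + ε e_d) and U ∩ (H⁻ + ε e_d) ⊆ T′. -/

import Mathlib

open MeasureTheory Metric Set
open scoped RealInnerProductSpace ENNReal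

noncomputable section

/-- The last standard basis vector `e_d` of `ℝ^d` (`d = n + 1`). -/
def ed (n : ℕ) : EuclideanSpace ℝ (Fin (n + 1)) := EuclideanSpace.single (Fin.last n) 1

/-- with `a = q − ε e_d`, `T = conv(U ∪ {a}) ∩ H⁻` and `T′ = a + 2(T − a)`,
we have `T + ε e_d ⊆ U ∩ (H⁻ + ε e_d)` and `U ∩ (H⁻ + ε e_d) ⊆ T′`. -/
theorem dual_cap_cone_sandwich (n : ℕ) (hn : 1 ≤ n)
    (U : Set (EuclideanSpace ℝ (Fin (n + 1)))) (hUcl : IsClosed U) (hUconv : Convex ℝ U)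
    (hUsh : ∀ x ∈ U, ∀ t : ℝ, 0 ≤ t → x + t • ed n ∈ U)
    (q u : EuclideanSpace ℝ (Fin (n + 1))) (hq : q ∈ frontier U) (hu : ‖u‖ = 1)
    (hsupp : ∀ x ∈ U, ⟪u, x - q⟫ ≤ 0) (hud : u (Fin.last n) < 0)
    (ε : ℝ) (hε : 0 < ε) :
    ((fun x => x + ε • ed n) ''
        (convexHull ℝ (U ∪ {q - ε • ed n}) ∩ {x | 0 ≤ ⟪u, x - q⟫})
      ⊆ U ∩ ((fun x => x + ε • ed n) '' {x | 0 ≤ ⟪u, x - q⟫})) ∧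
    (U ∩ ((fun x => x + ε • ed n) '' {x | 0 ≤ ⟪u, x - q⟫})
      ⊆ (fun x => (q - ε • ed n) + (2 : ℝ) • (x - (q - ε • ed n))) ''
          (convexHull ℝ (U ∪ {q - ε • ed n}) ∩ {x | 0 ≤ ⟪u, x - q⟫})) := by
  have hqU : q ∈ U := hUcl.closure_eq ▸ frontier_subset_closure hq
  constructor
  · rintro _ ⟨x, ⟨hxc, hxH⟩, rfl⟩
    refine ⟨?_, x, hxH, rfl⟩
    have hVconv : Convex ℝ ((fun x => x + ε • ed n) ⁻¹' U) := by
      have := hUconv.translate_preimage_right (ε • ed n)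
      have e : (fun x => x + ε • ed n) = fun x => ε • ed n + x := funext fun x => add_comm _ _
      rw [e]; exact this
    have hsub : convexHull ℝ (U ∪ {q - ε • ed n}) ⊆ (fun x => x + ε • ed n) ⁻¹' U := by
      apply convexHull_min _ hVconv
      rintro y (hy | hy)
      · exact hUsh y hy ε hε.le
      · simp only [Set.mem_singleton_iff] at hy
        subst hy
        show q - ε • ed n + ε • ed n ∈ U
        simpa using hqU
    exact hsub hxc
  · rintro z ⟨hzU, y, hyH, rfl⟩
    refine ⟨(1/2 : ℝ) • (q - ε • ed n) + (1/2 : ℝ) • (y + ε • ed n), ⟨?_, ?_⟩, ?_⟩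
    · have ha : q - ε • ed n ∈ convexHull ℝ (U ∪ {q - ε • ed n}) :=
        subset_convexHull ℝ _ (Set.mem_union_right _ rfl)
      have hz : y + ε • ed n ∈ convexHull ℝ (U ∪ {q - ε • ed n}) :=
        subset_convexHull ℝ _ (Set.mem_union_left _ hzU)
      exact (convex_convexHull ℝ _) ha hz (by norm_num) (by norm_num) (by norm_num)
    · show 0 ≤ ⟪u, _⟫
      have heq : (1/2 : ℝ) • (q - ε • ed n) + (1/2 : ℝ) • (y + ε • ed n) - q
          = (1/2 : ℝ) • (y - q) := by module
      rw [heq, real_inner_smul_right]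
      have : (0:ℝ) ≤ ⟪u, y - q⟫ := hyH
      linarith
    · show _ + (2:ℝ) • _ = _
      module

end
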